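/- Let P ≥ 2 be an integer and a an integer with 0 < a < P. Define the odd periodic function ψ(n) of period 2P by ψ(n) = ±1 if n ≡ ±a mod 2P and 0 otherwise. Then for every integer N ≥ 1, the limit as t → 0⁺ of ∑_{n=0}^{∞} ψ(n)·e^{πi n²N/(2P) - nt} equals -∑_{k=0}^{2P} ψ(k)·e^{πi N k²/(2P)}·B₁(k/(2P)) = (1 - a/P)·e^{πi a² N/(2P)}, where B₁(x) = x - 1/2. -/

import Mathlib

open Complex Finset Filter Topology

/-- The odd periodic function `ψ_{2P}^{(a)}` of period `2P`: `ψ(n) = ±1` for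
`n ≡ ±a (mod 2P)` and `0` otherwise. -/
def psi (P a : ℕ) (n : ℤ) : ℤ :=
  (if (n : ZMod (2 * P)) = ((a : ℤ) : ZMod (2 * P)) then 1 else 0) -
    (if (n : ZMod (2 * P)) = ((-(a : ℤ) : ℤ) : ZMod (2 * P)) then 1 else 0)




lemma cond1_iff (P a n : ℕ) :
    (((n : ℤ) : ZMod (2 * P)) = ((a : ℤ) : ZMod (2 * P))) ↔ ((2*P : ℤ)) ∣ (a : ℤ) - n := by
  rw [ZMod.intCast_eq_intCast_iff, Int.modEq_iff_dvd]
  push_cast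
  rfl

lemma cond2_iff (P a n : ℕ) :
    (((n : ℤ) : ZMod (2 * P)) = ((-(a:ℕ) : ℤ) : ZMod (2 * P))) ↔ ((2*P : ℤ)) ∣ -(a : ℤ) - n := by
  rw [ZMod.intCast_eq_intCast_iff, Int.modEq_iff_dvd]
  push_cast
  rfl

lemma psi_eval (P a : ℕ) (ha0 : 0 < a) (ha : a < P) {k : ℕ} (hk : k ≤ 2*P) :
    psi P a (k : ℤ) = if k = a then 1 else if k = 2*P - a then -1 else 0 := by
  unfold psi
  simp only [cond1_iff, cond2_iff]
  by_cases hka : k = a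
  · subst hka
    rw [if_pos ⟨0, by ring⟩, if_neg (fun hd => by
      have := Int.eq_zero_of_abs_lt_dvd hd (abs_lt.mpr ⟨by omega, by omega⟩); omega),
      if_pos rfl]
    norm_num
  · rw [if_neg (fun hd => by
      have := Int.eq_zero_of_abs_lt_dvd hd (abs_lt.mpr ⟨by omega, by omega⟩)
      exact hka (by omega)), if_neg hka]
    by_cases hkb : k = 2*P - a
    · subst hkb
      rw [if_pos ⟨-1, by push_cast [Nat.cast_sub (by omega : a ≤ 2*P)]; ring⟩, if_pos rfl]
      norm_num
    · rw [if_neg (fun hd => by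
        have hd2 : ((2*P : ℤ)) ∣ (-(a:ℤ) - k) + 2*P := dvd_add hd ⟨1, by ring⟩
        have := Int.eq_zero_of_abs_lt_dvd hd2 (abs_lt.mpr ⟨by omega, by omega⟩)
        exact hkb (by omega)), if_neg hkb]
      norm_num

lemma exists_nat_mul {m x : ℤ} (hm : 0 < m) (h : m ∣ x) (hx : 0 ≤ x) : ∃ q : ℕ, x = m * q := by
  obtain ⟨c, rfl⟩ := h
  have hc : 0 ≤ c := by by_contra hneg; push_neg at hneg; nlinarith
  exact ⟨c.toNat, by rw [Int.toNat_of_nonneg hc]⟩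

lemma psi_support (P a : ℕ) (ha0 : 0 < a) (ha : a < P) {n : ℕ} (h : psi P a (n : ℤ) ≠ 0) :
    ∃ q : ℕ, n = a + 2*P*q ∨ n = (2*P - a) + 2*P*q := by
  unfold psi at h
  simp only [cond1_iff, cond2_iff] at h
  have hP2 : (0:ℤ) < 2*P := by by_contra hx; push_neg at hx; omega
  by_cases h1 : ((2*P : ℤ)) ∣ (a : ℤ) - n
  · rcases le_or_gt (a:ℤ) (n:ℤ) with hle | hlt
    · have h1' : ((2*P : ℤ)) ∣ (n : ℤ) - a := by
        rw [show (n:ℤ) - a = -((a:ℤ) - n) by ring]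
        exact dvd_neg.2 h1
      obtain ⟨q, hq⟩ := exists_nat_mul hP2 h1' (by omega)
      have hcast : ((2*P*q : ℕ) : ℤ) = 2*(P:ℤ)*q := by push_cast; ring
      exact ⟨q, Or.inl (by omega)⟩
    · have := Int.eq_zero_of_abs_lt_dvd h1 (abs_lt.mpr ⟨by omega, by omega⟩)
      exact ⟨0, Or.inl (by omega)⟩
  · by_cases h2 : ((2*P : ℤ)) ∣ -(a : ℤ) - n
    · have h2' : ((2*P : ℤ)) ∣ (n : ℤ) + a := by
        have := h2.neg_right
        rw [neg_sub'] at this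
        simpa [add_comm] using this
      obtain ⟨q, hq⟩ := exists_nat_mul hP2 h2' (by omega)
      have hq1 : 1 ≤ q := by
        rcases Nat.eq_zero_or_pos q with rfl | h
        · simp at hq; omega
        · exact h
      have hexp : (2*(P:ℤ)) * q = 2*P*((q-1 : ℕ)) + 2*P := by
        push_cast [Nat.cast_sub hq1]
        ring
      have hcast : ((2*P*(q-1) : ℕ) : ℤ) = 2*(P:ℤ)*((q-1 : ℕ)) := by push_cast; ring
      exact ⟨q - 1, Or.inr (by omega)⟩
    · rw [if_neg h1, if_neg h2] at h
      omega

lemma exp_period (P N r q : ℕ) (hP : 0 < P) :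
    Complex.exp (Real.pi * Complex.I * ((r + 2*P*q : ℕ):ℂ)^2 * N / (2*P)) =
    Complex.exp (Real.pi * Complex.I * (r:ℂ)^2 * N / (2*P)) := by
  have hPne : ((P:ℂ)) ≠ 0 := Nat.cast_ne_zero.mpr hP.ne'
  have key : (Real.pi : ℂ) * Complex.I * ((r + 2*P*q : ℕ):ℂ)^2 * N / (2*P) =
      Real.pi * Complex.I * (r:ℂ)^2 * N / (2*P)
        + ((N*(q*r + P*q^2) : ℕ):ℂ) * (2 * Real.pi * Complex.I) := by
    push_cast
    field_simp
    ring
  rw [key, Complex.exp_add, Complex.exp_nat_mul_two_pi_mul_I, mul_one]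

lemma exp_refl (P N a : ℕ) (hP : 0 < P) (h : a ≤ P) :
    Complex.exp (Real.pi * Complex.I * ((2*P - a : ℕ):ℂ)^2 * N / (2*P)) =
    Complex.exp (Real.pi * Complex.I * (a:ℂ)^2 * N / (2*P)) := by
  have hPne : ((P:ℂ)) ≠ 0 := Nat.cast_ne_zero.mpr hP.ne'
  have key : (Real.pi : ℂ) * Complex.I * ((2*P - a : ℕ):ℂ)^2 * N / (2*P) =
      Real.pi * Complex.I * (a:ℂ)^2 * N / (2*P)
        + ((N*(P - a) : ℕ):ℂ) * (2 * Real.pi * Complex.I) := by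
    push_cast [Nat.cast_sub h, Nat.cast_sub (by omega : a ≤ 2*P)]
    field_simp
    ring
  rw [key, Complex.exp_add, Complex.exp_nat_mul_two_pi_mul_I, mul_one]


lemma cond1_rep (P a : ℕ) (ha0 : 0 < a) (ha : a < P) {n : ℕ}
    (h : ((n : ℤ) : ZMod (2 * P)) = ((a : ℤ) : ZMod (2 * P))) : ∃ q : ℕ, n = a + 2*P*q := by
  rw [cond1_iff] at h
  have hP2 : (0:ℤ) < 2*P := by by_contra hx; push_neg at hx; omega
  rcases le_or_gt (a:ℤ) (n:ℤ) with hle | hlt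
  · have h1' : ((2*P : ℤ)) ∣ (n : ℤ) - a := by
      rw [show (n:ℤ) - a = -((a:ℤ) - n) by ring]
      exact dvd_neg.2 h
    obtain ⟨q, hq⟩ := exists_nat_mul hP2 h1' (by omega)
    have hcast : ((2*P*q : ℕ) : ℤ) = 2*(P:ℤ)*q := by push_cast; ring
    exact ⟨q, by omega⟩
  · have := Int.eq_zero_of_abs_lt_dvd h (abs_lt.mpr ⟨by omega, by omega⟩)
    exact ⟨0, by omega⟩

lemma cond2_rep (P a : ℕ) (ha0 : 0 < a) (ha : a < P) {n : ℕ}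
    (h : ((n : ℤ) : ZMod (2 * P)) = ((-(a:ℕ) : ℤ) : ZMod (2 * P))) :
    ∃ q : ℕ, n = (2*P - a) + 2*P*q := by
  rw [cond2_iff] at h
  have hP2 : (0:ℤ) < 2*P := by by_contra hx; push_neg at hx; omega
  have h2' : ((2*P : ℤ)) ∣ (n : ℤ) + a := by
    have := dvd_neg.2 h
    rw [show -(-(a:ℤ) - n) = (n:ℤ) + a by ring] at this
    exact this
  obtain ⟨q, hq⟩ := exists_nat_mul hP2 h2' (by omega)
  have hq1 : 1 ≤ q := by
    rcases Nat.eq_zero_or_pos q with rfl | h'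
    · simp at hq; omega
    · exact h'
  have hexp : (2*(P:ℤ)) * q = 2*P*((q-1 : ℕ)) + 2*P := by
    push_cast [Nat.cast_sub hq1]
    ring
  have hcast : ((2*P*(q-1) : ℕ) : ℤ) = 2*(P:ℤ)*((q-1:ℕ)) := by push_cast; ring
  exact ⟨q - 1, by omega⟩

lemma part2 (P a N : ℕ) (hP : 2 ≤ P) (ha0 : 0 < a) (ha : a < P) :
    -∑ k ∈ Finset.range (2 * P + 1), (psi P a (k : ℤ) : ℂ) *
        Complex.exp (Real.pi * Complex.I * N * (k : ℂ) ^ 2 / (2 * P)) * ((k : ℂ) / (2 * P) - 1/2)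
      = (1 - (a : ℂ) / P) * Complex.exp (Real.pi * Complex.I * (a : ℂ) ^ 2 * N / (2 * P)) := by
  have hre : ∀ k : ℂ, (Real.pi : ℂ) * Complex.I * N * k ^ 2 / (2*P)
      = Real.pi * Complex.I * k ^ 2 * N / (2*P) := fun k => by ring
  simp only [hre]
  have hsub : ({a, 2*P - a} : Finset ℕ) ⊆ Finset.range (2*P+1) := by
    intro k hk
    simp only [Finset.mem_insert, Finset.mem_singleton] at hk
    rcases hk with rfl | rfl <;> simp [Finset.mem_range] <;> omega
  have hzero : ∀ k ∈ Finset.range (2*P+1), k ∉ ({a, 2*P - a} : Finset ℕ) →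
      (psi P a (k : ℤ) : ℂ) *
        Complex.exp (Real.pi * Complex.I * (k : ℂ) ^ 2 * N / (2 * P)) * ((k : ℂ) / (2 * P) - 1/2) = 0 := by
    intro k hk hk'
    simp only [Finset.mem_insert, Finset.mem_singleton, not_or] at hk'
    rw [psi_eval P a ha0 ha (by simp [Finset.mem_range] at hk; omega), if_neg hk'.1, if_neg hk'.2]
    simp
  rw [← Finset.sum_subset hsub hzero, Finset.sum_pair (by omega : a ≠ 2*P - a)]
  rw [psi_eval P a ha0 ha (by omega : a ≤ 2*P), if_pos rfl,
    psi_eval P a ha0 ha (by omega : 2*P - a ≤ 2*P), if_neg (by omega), if_pos rfl,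
    exp_refl P N a (by omega) ha.le]
  have hc : ((2*P - a : ℕ):ℂ) = 2*(P:ℂ) - a := by
    push_cast [Nat.cast_sub (by omega : a ≤ 2*P)]
    ring
  rw [hc]
  have hP0 : ((P:ℂ)) ≠ 0 := Nat.cast_ne_zero.mpr (by omega)
  push_cast
  field_simp
  ring



lemma part1 (P a N : ℕ) (hP : 2 ≤ P) (ha0 : 0 < a) (ha : a < P) (hN : 1 ≤ N) :
    Filter.Tendsto
      (fun t : ℝ => ∑' n : ℕ, (psi P a (n : ℤ) : ℂ) *
        Complex.exp (Real.pi * Complex.I * (n : ℂ) ^ 2 * N / (2 * P) - (n : ℂ) * (t : ℂ)))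
      (𝓝[>] (0 : ℝ))
      (𝓝 ((1 - (a : ℂ) / P) * Complex.exp (Real.pi * Complex.I * (a : ℂ) ^ 2 * N / (2 * P)))) := by
  set E : ℂ := Complex.exp (Real.pi * Complex.I * (a : ℂ) ^ 2 * N / (2 * P)) with hE
  set m : ℕ := 2*P - 2*a with hm
  set f₁ : ℂ → ℂ := fun z => E * z^a * (∑ i ∈ range m, z^i) * (∑ i ∈ range (2*P), z^i)⁻¹ with hf₁
  set f₂ : ℝ → ℂ := fun t => ((Real.exp (-t) : ℝ) : ℂ) with hf₂
  -- continuity of f₁ at 1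
  have hcont : ContinuousAt f₁ 1 := by
    apply ContinuousAt.mul
    apply ContinuousAt.mul
    apply ContinuousAt.mul continuousAt_const (continuous_pow a).continuousAt
    · exact (continuous_finset_sum _ fun i _ => continuous_pow i).continuousAt
    · apply ContinuousAt.inv₀ (continuous_finset_sum _ fun i _ => continuous_pow i).continuousAt
      simp only [one_pow, Finset.sum_const, Finset.card_range, nsmul_eq_mul, mul_one]
      exact Nat.cast_ne_zero.mpr (by omega)
  have hval : f₁ 1 = (1 - (a : ℂ) / P) * E := by
    simp only [hf₁, one_pow, Finset.sum_const, Finset.card_range, nsmul_eq_mul, mul_one]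
    have hP0 : ((P:ℂ)) ≠ 0 := Nat.cast_ne_zero.mpr (by omega)
    rw [hm]
    push_cast [Nat.cast_sub (by omega : 2*a ≤ 2*P)]
    field_simp
  have htend1 : Filter.Tendsto f₁ (𝓝 1) (𝓝 ((1 - (a : ℂ) / P) * E)) := by
    rw [← hval]; exact hcont.tendsto
  have htend2 : Filter.Tendsto f₂ (𝓝[>] (0:ℝ)) (𝓝 1) := by
    have h1 : Filter.Tendsto (fun t : ℝ => Real.exp (-t)) (𝓝[>] (0:ℝ)) (𝓝 1) := by
      have h0 : Filter.Tendsto (fun t : ℝ => Real.exp (-t)) (𝓝 (0:ℝ)) (𝓝 1) := by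
        have := (Real.continuous_exp.comp continuous_neg).continuousAt (x := (0:ℝ))
        simpa [Function.comp_def] using this.tendsto
      exact h0.mono_left nhdsWithin_le_nhds
    have h2 : Filter.Tendsto (fun r : ℝ => (r:ℂ)) (𝓝 (1:ℝ)) (𝓝 ((1:ℝ):ℂ)) :=
      Complex.continuous_ofReal.continuousAt
    simpa [Function.comp_def, hf₂] using h2.comp h1
  apply (htend1.comp htend2).congr'
  filter_upwards [self_mem_nhdsWithin] with t ht
  simp only [Set.mem_Ioi] at ht
  -- now the computation for fixed t > 0
  set x : ℝ := Real.exp (-t) with hx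
  have hx0 : 0 < x := Real.exp_pos _
  have hx1 : x < 1 := Real.exp_lt_one_iff.mpr (by linarith)
  set z : ℂ := ((x : ℝ) : ℂ) with hz
  have hznorm : ‖z‖ = x := by rw [hz, Complex.norm_real, Real.norm_of_nonneg hx0.le]
  -- step A : rewrite each term
  have hxpow : ∀ n : ℕ, Complex.exp (-((n:ℂ) * t)) = z^n := by
    intro n
    rw [show -((n:ℂ)*t) = n * (((-t : ℝ)):ℂ) by push_cast; ring, Complex.exp_nat_mul,
      ← Complex.ofReal_exp]
  have hterm : ∀ n : ℕ,
      (psi P a (n : ℤ) : ℂ) *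
        Complex.exp (Real.pi * Complex.I * (n : ℂ) ^ 2 * N / (2 * P) - (n : ℂ) * (t : ℂ))
      = E * ((psi P a (n : ℤ) : ℂ) * z^n) := by
    intro n
    rw [sub_eq_add_neg, Complex.exp_add, hxpow n]
    by_cases hψ : psi P a (n : ℤ) = 0
    · rw [hψ]; simp
    · have hEeq : Complex.exp (Real.pi * Complex.I * (n : ℂ) ^ 2 * N / (2 * P)) = E := by
        have hrep : (∃ q : ℕ, n = a + 2*P*q) ∨ (∃ q : ℕ, n = (2*P - a) + 2*P*q) := by
          unfold psi at hψ
          by_cases h1 : ((n : ℤ) : ZMod (2 * P)) = ((a : ℤ) : ZMod (2 * P))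
          · exact Or.inl (cond1_rep P a ha0 ha h1)
          · by_cases h2 : ((n : ℤ) : ZMod (2 * P)) = ((-(a:ℕ) : ℤ) : ZMod (2 * P))
            · exact Or.inr (cond2_rep P a ha0 ha h2)
            · rw [if_neg h1, if_neg h2] at hψ; omega
        rcases hrep with ⟨q, rfl⟩ | ⟨q, rfl⟩
        · exact exp_period P N a q (by omega)
        · rw [exp_period P N (2*P - a) q (by omega)]
          exact exp_refl P N a (by omega) ha.le
      rw [hEeq]
      ring
  rw [tsum_congr hterm, tsum_mul_left]
  -- step B : split psi
  have hsplit : ∀ n : ℕ, (psi P a (n:ℤ) : ℂ) * z^n =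
      (if ((n:ℤ) : ZMod (2*P)) = ((a:ℤ) : ZMod (2*P)) then z^n else 0)
      - (if ((n:ℤ) : ZMod (2*P)) = ((-(a:ℕ) : ℤ) : ZMod (2*P)) then z^n else 0) := by
    intro n
    unfold psi
    push_cast
    split_ifs <;> ring
  have hsummand_le : ∀ (c : ℕ → Prop) [DecidablePred c] (n : ℕ),
      ‖(if c n then z^n else 0)‖ ≤ x^n := by
    intro c _ n
    split_ifs
    · rw [norm_pow, hznorm]
    · simp only [norm_zero]; positivity
  have hgeo : Summable (fun n : ℕ => x^n) := summable_geometric_of_lt_one hx0.le hx1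
  have hsum1 : Summable (fun n : ℕ =>
      (if ((n:ℤ) : ZMod (2*P)) = ((a:ℤ) : ZMod (2*P)) then z^n else 0)) :=
    Summable.of_norm (hgeo.of_nonneg_of_le (fun n => norm_nonneg _) (hsummand_le _))
  have hsum2 : Summable (fun n : ℕ =>
      (if ((n:ℤ) : ZMod (2*P)) = ((-(a:ℕ) : ℤ) : ZMod (2*P)) then z^n else 0)) :=
    Summable.of_norm (hgeo.of_nonneg_of_le (fun n => norm_nonneg _) (hsummand_le _))
  rw [tsum_congr hsplit, Summable.tsum_sub hsum1 hsum2]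
  -- step C : geometric evaluation of the two indicator sums
  have hr2P : ‖z^(2*P)‖ < 1 := by
    rw [norm_pow, hznorm]
    exact pow_lt_one₀ hx0.le hx1 (by omega)
  have key : ∀ r : ℕ, (∀ {n : ℕ}, ((n:ℤ) : ZMod (2*P)) = ((r:ℤ) : ZMod (2*P)) → ∃ q : ℕ, n = r + 2*P*q) →
      (∀ q : ℕ, (((r + 2*P*q : ℕ):ℤ) : ZMod (2*P)) = ((r:ℤ) : ZMod (2*P))) →
      ∑' n : ℕ, (if ((n:ℤ) : ZMod (2*P)) = ((r:ℤ) : ZMod (2*P)) then z^n else 0)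
        = z^r * (1 - z^(2*P))⁻¹ := by
    intro r hrep hmem
    have hinj : Function.Injective (fun q : ℕ => r + 2*P*q) := by
      intro q1 q2 h
      simp only [add_right_inj] at h
      exact Nat.eq_of_mul_eq_mul_left (by omega) h
    have hsupp : Function.support
        (fun n : ℕ => (if ((n:ℤ) : ZMod (2*P)) = ((r:ℤ) : ZMod (2*P)) then z^n else 0))
        ⊆ Set.range (fun q : ℕ => r + 2*P*q) := by
      intro n hn
      simp only [Function.mem_support] at hn
      have hc : ((n:ℤ) : ZMod (2*P)) = ((r:ℤ) : ZMod (2*P)) := by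
        by_contra hcc
        rw [if_neg hcc] at hn
        exact hn rfl
      obtain ⟨q, hq⟩ := hrep hc
      exact ⟨q, hq.symm⟩
    rw [← hinj.tsum_eq hsupp]
    have heval : ∀ q : ℕ,
        (if (((r + 2*P*q : ℕ):ℤ) : ZMod (2*P)) = ((r:ℤ) : ZMod (2*P)) then z^(r + 2*P*q) else 0)
        = z^r * (z^(2*P))^q := by
      intro q
      rw [if_pos (hmem q), pow_add, pow_mul]
    rw [tsum_congr heval, tsum_mul_left, tsum_geometric_of_norm_lt_one hr2P]
  have key1 := key a (fun {n} h => cond1_rep P a ha0 ha h) (fun q => by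
    rw [cond1_iff]
    exact ⟨-q, by push_cast; ring⟩)
  have key2 : ∑' n : ℕ, (if ((n:ℤ) : ZMod (2*P)) = ((-(a:ℕ) : ℤ) : ZMod (2*P)) then z^n else 0)
      = z^(2*P - a) * (1 - z^(2*P))⁻¹ := by
    have hinj : Function.Injective (fun q : ℕ => (2*P - a) + 2*P*q) := by
      intro q1 q2 h
      simp only [add_right_inj] at h
      exact Nat.eq_of_mul_eq_mul_left (by omega) h
    have hsupp : Function.support
        (fun n : ℕ => (if ((n:ℤ) : ZMod (2*P)) = ((-(a:ℕ) : ℤ) : ZMod (2*P)) then z^n else 0))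
        ⊆ Set.range (fun q : ℕ => (2*P - a) + 2*P*q) := by
      intro n hn
      simp only [Function.mem_support] at hn
      have hc : ((n:ℤ) : ZMod (2*P)) = ((-(a:ℕ) : ℤ) : ZMod (2*P)) := by
        by_contra hcc
        rw [if_neg hcc] at hn
        exact hn rfl
      obtain ⟨q, hq⟩ := cond2_rep P a ha0 ha hc
      exact ⟨q, hq.symm⟩
    rw [← hinj.tsum_eq hsupp]
    have heval : ∀ q : ℕ,
        (if ((((2*P - a) + 2*P*q : ℕ):ℤ) : ZMod (2*P)) = ((-(a:ℕ) : ℤ) : ZMod (2*P))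
          then z^((2*P - a) + 2*P*q) else 0)
        = z^(2*P - a) * (z^(2*P))^q := by
      intro q
      rw [if_pos, pow_add, pow_mul]
      rw [cond2_iff]
      refine ⟨-(1+q), ?_⟩
      push_cast [Nat.cast_sub (by omega : a ≤ 2*P)]
      ring
    rw [tsum_congr heval, tsum_mul_left, tsum_geometric_of_norm_lt_one hr2P]
  rw [key1, key2]
  -- step D : algebra
  have hz1 : z ≠ 1 := by
    rw [hz]
    intro h
    rw [Complex.ofReal_eq_one] at h
    linarith
  have h1z : (1 : ℂ) - z ≠ 0 := sub_ne_zero.mpr (Ne.symm hz1)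
  have h2P0 : (1 : ℂ) - z^(2*P) ≠ 0 := by
    refine sub_ne_zero.mpr ?_
    intro h
    rw [hz, ← Complex.ofReal_pow] at h
    have : (1:ℝ) = x^(2*P) := by exact_mod_cast h
    have := pow_lt_one₀ hx0.le hx1 (by omega : 2*P ≠ 0)
    linarith
  have geom : ∀ k : ℕ, (1 - z) * ∑ i ∈ range k, z^i = 1 - z^k := by
    intro k
    have h := geom_sum_mul z k
    linear_combination -h
  have hGne : (∑ i ∈ range (2*P), z^i) ≠ 0 := by
    intro h0
    apply h2P0
    rw [← geom (2*P), h0, mul_zero]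
  have hgoal : z^a * (1 - z^(2*P))⁻¹ - z^(2*P - a) * (1 - z^(2*P))⁻¹
      = z^a * (∑ i ∈ range m, z^i) * (∑ i ∈ range (2*P), z^i)⁻¹ := by
    rw [show 2*P - a = a + m by omega, pow_add]
    field_simp [h2P0, hGne]
    linear_combination (-(z^a * (∑ i ∈ range (2*P), z^i))) * geom m
      + (z^a * (∑ i ∈ range m, z^i)) * geom (2*P)
  simp only [Function.comp_apply, hf₁, hf₂]
  rw [hgoal, hz, hx]
  ring

theorem eichler_psi_limit (P a N : ℕ) (hP : 2 ≤ P) (ha0 : 0 < a) (ha : a < P) (hN : 1 ≤ N) :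
    Filter.Tendsto
      (fun t : ℝ => ∑' n : ℕ, (psi P a (n : ℤ) : ℂ) *
        Complex.exp (Real.pi * Complex.I * (n : ℂ) ^ 2 * N / (2 * P) - (n : ℂ) * (t : ℂ)))
      (𝓝[>] (0 : ℝ))
      (𝓝 (-∑ k ∈ Finset.range (2 * P + 1), (psi P a (k : ℤ) : ℂ) *
        Complex.exp (Real.pi * Complex.I * N * (k : ℂ) ^ 2 / (2 * P)) * ((k : ℂ) / (2 * P) - 1/2)))
    ∧
    -∑ k ∈ Finset.range (2 * P + 1), (psi P a (k : ℤ) : ℂ) *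
        Complex.exp (Real.pi * Complex.I * N * (k : ℂ) ^ 2 / (2 * P)) * ((k : ℂ) / (2 * P) - 1/2)
      = (1 - (a : ℂ) / P) * Complex.exp (Real.pi * Complex.I * (a : ℂ) ^ 2 * N / (2 * P)) := by
  constructor
  · rw [part2 P a N hP ha0 ha]
    exact part1 P a N hP ha0 ha hN
  · exact part2 P a N hP ha0 ha
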